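/- Let n ≥ 2 and let A and B be symmetric (n+1)×(n+1) complex matrices whose pencil has generic corank r ≥ 1 (so every member is singular) and non-constant vertices. Let W ⊆ ℂ^{n+1} be the linear span of the union of the kernels ker(A+tB) over all t ∈ ℂ with corank(A+tB) = r. Then r + 1 ≤ dim W and 2·dim W ≤ n + r + 1; equivalently, the projective subspace Π spanned by the vertices of the generic members has dimension m with r ≤ m ≤ (n+r−1)/2. -/

import Mathlib

open Matrix Polynomial Module Submodule

/-- From a family spanning a space of finrank ≥ k, extract k indices giving
a linearly independent subfamily. -/
lemma exists_comp_linearIndependent {V : Type*} [AddCommGroup V] [Module ℂ V]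
    [FiniteDimensional ℂ V] {ι : Type*} (v : ι → V) (k : ℕ)
    (hk : k ≤ Module.finrank ℂ (Submodule.span ℂ (Set.range v))) :
    ∃ g : Fin k → ι, LinearIndependent ℂ (v ∘ g) := by
  classical
  obtain ⟨b, hbsub, hbspan, hbind⟩ := exists_linearIndependent ℂ (Set.range v)
  have hfin : b.Finite := hbind.setFinite
  haveI : Fintype b := hfin.fintype
  have hcard : k ≤ Fintype.card b := by
    have h0 : k ≤ Module.finrank ℂ (Submodule.span ℂ b) := by rw [hbspan]; exact hk
    have h1 : Module.finrank ℂ (Submodule.span ℂ b) = b.toFinset.card :=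
      finrank_span_set_eq_card hbind
    have h2 : b.toFinset.card = Fintype.card b := Set.toFinset_card b
    omega
  let emb : Fin k → b := fun j => (Fintype.equivFin b).symm (Fin.castLE hcard j)
  have hembinj : Function.Injective emb := by
    intro a a' h
    have := (Fintype.equivFin b).symm.injective h
    exact Fin.castLE_injective hcard this
  have hmem : ∀ j, ((emb j : V)) ∈ Set.range v := fun j => hbsub (emb j).2
  refine ⟨fun j => (hmem j).choose, ?_⟩
  have heq : v ∘ (fun j => (hmem j).choose) = (fun x : b => (x : V)) ∘ emb := by
    funext j
    exact (hmem j).choose_spec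
  rw [heq]
  exact hbind.comp emb hembinj

/-- A matrix of rank ≥ k has an invertible k×k submatrix. -/
lemma exists_submatrix_isUnit {N : ℕ} (M : Matrix (Fin N) (Fin N) ℂ) {k : ℕ}
    (hk : k ≤ M.rank) :
    ∃ f g : Fin k → Fin N, IsUnit (M.submatrix f g) := by
  have h1 : k ≤ Module.finrank ℂ (Submodule.span ℂ (Set.range Mᵀ)) := by
    rw [Matrix.rank_eq_finrank_span_cols] at hk; exact hk
  obtain ⟨g, hg⟩ := exists_comp_linearIndependent Mᵀ k h1
  set M₂ : Matrix (Fin k) (Fin N) ℂ := Mᵀ.submatrix g id with hM₂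
  have hrows : LinearIndependent ℂ (fun i => M₂ i) := hg
  have hr2 : M₂.rank = k := by
    rw [LinearIndependent.rank_matrix (M := M₂) hrows, Fintype.card_fin]
  have h2 : k ≤ Module.finrank ℂ (Submodule.span ℂ (Set.range M₂ᵀ)) := by
    have h := hr2.ge; rw [Matrix.rank_eq_finrank_span_cols] at h; exact h
  obtain ⟨f, hf⟩ := exists_comp_linearIndependent M₂ᵀ k h2
  refine ⟨f, g, ?_⟩
  have : LinearIndependent ℂ (fun a => (M.submatrix f g) a) := hf
  exact Matrix.linearIndependent_rows_iff_isUnit.mp this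

/-- If k independent rows of M are orthogonal to v and rank M ≤ k, then M v = 0. -/
lemma mulVec_eq_zero_of_rows {N k : ℕ} (M : Matrix (Fin N) (Fin N) ℂ) (f : Fin k → Fin N)
    (hind : LinearIndependent ℂ (fun i => M (f i))) (hrank : M.rank ≤ k)
    (v : Fin N → ℂ) (hv : ∀ i, M (f i) ⬝ᵥ v = 0) : M.mulVec v = 0 := by
  have hle : Submodule.span ℂ (Set.range fun i => M (f i)) ≤
      Submodule.span ℂ (Set.range M) := by
    apply Submodule.span_mono
    rintro _ ⟨i, rfl⟩
    exact Set.mem_range_self (f i)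
  have h2 : Module.finrank ℂ (Submodule.span ℂ (Set.range fun i => M (f i))) = k := by
    rw [finrank_span_eq_card hind, Fintype.card_fin]
  have h1 : Module.finrank ℂ (Submodule.span ℂ (Set.range M)) ≤ k := by
    rw [Matrix.rank_eq_finrank_span_row] at hrank
    exact hrank
  have heq := Submodule.eq_of_le_of_finrank_le hle (by rw [h2]; exact h1)
  let φ : (Fin N → ℂ) →ₗ[ℂ] ℂ :=
    { toFun := fun w => w ⬝ᵥ v
      map_add' := fun a b => add_dotProduct a b v
      map_smul' := fun c a => smul_dotProduct c a v }
  have hker : Submodule.span ℂ (Set.range fun i => M (f i)) ≤ LinearMap.ker φ := by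
    rw [Submodule.span_le]
    rintro _ ⟨i, rfl⟩
    exact hv i
  funext j
  have hmem : M j ∈ Submodule.span ℂ (Set.range M) := Submodule.subset_span ⟨j, rfl⟩
  rw [← heq] at hmem
  exact hker hmem


set_option maxHeartbeats 800000 in
/-- Key isotropy lemma: if the pencil has rank ≤ k everywhere and rank exactly k at t,
then B is isotropic on the kernel of A + t•B. -/
lemma key_isotropy {N : ℕ} (A B : Matrix (Fin N) (Fin N) ℂ)
    (hA : A.IsSymm) (hB : B.IsSymm) {k : ℕ}
    (hge : ∀ u : ℂ, (A + u • B).rank ≤ k) (t : ℂ) (ht : (A + t • B).rank = k)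
    (x y : Fin N → ℂ) (hx : (A + t • B).mulVec x = 0) (hy : (A + t • B).mulVec y = 0) :
    y ⬝ᵥ B.mulVec x = 0 := by
  classical
  obtain ⟨f, g, hfg⟩ := exists_submatrix_isUnit (A + t • B) ht.ge
  -- the polynomial pencil
  set P : Matrix (Fin N) (Fin N) ℂ[X] := A.map C + (X : ℂ[X]) • B.map C with hPdef
  have hPmap : ∀ u : ℂ, P.map (eval u) = A + u • B := by
    intro u
    ext i j
    simp only [hPdef, Matrix.map_apply, Matrix.add_apply, Matrix.smul_apply, smul_eq_mul,
      eval_add, eval_mul, eval_X, eval_C]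
  -- g is injective
  have hgind : LinearIndependent ℂ (fun j => ((A + t • B).submatrix f g)ᵀ j) :=
    Matrix.linearIndependent_cols_iff_isUnit.mpr hfg
  have hginj : Function.Injective g := by
    intro a b hab
    apply hgind.injective
    funext i
    simp only [Matrix.transpose_apply, Matrix.submatrix_apply, hab]
  -- complement of the range of g
  have hkN : k ≤ N := by
    rw [← ht]
    simpa using Matrix.rank_le_card_width (A + t • B)
  have hcard : Fintype.card ((Set.range g)ᶜ : Set (Fin N)) = N - k := by
    rw [Fintype.card_compl_set]
    rw [Set.card_range_of_injective hginj]
    simp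
  let e : (Fin k ⊕ Fin (N - k)) ≃ Fin N :=
    ((Equiv.ofInjective g hginj).sumCongr (Fintype.equivFinOfCardEq hcard).symm).trans
      (Equiv.Set.sumCompl (Set.range g))
  have he₁ : ∀ i, e (Sum.inl i) = g i := by
    intro i
    simp [e, Equiv.Set.sumCompl_apply_inl]
  set h : Fin (N - k) → Fin N := fun i => e (Sum.inr i) with hhdef
  -- sum splitting
  have hsum : ∀ (F : Fin N → ℂ[X]), ∑ j, F j = (∑ i, F (g i)) + ∑ i, F (h i) := by
    intro F
    rw [← Equiv.sum_comp e F, Fintype.sum_sum_type]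
    simp only [he₁, hhdef]
  have hsumC : ∀ (F : Fin N → ℂ), ∑ j, F j = (∑ i, F (g i)) + ∑ i, F (h i) := by
    intro F
    rw [← Equiv.sum_comp e F, Fintype.sum_sum_type]
    simp only [he₁, hhdef]
  -- polynomial kernel family
  set SP : Matrix (Fin k) (Fin k) ℂ[X] := P.submatrix f g with hSPdef
  set TP : Matrix (Fin k) (Fin (N - k)) ℂ[X] := P.submatrix f h with hTPdef
  set DP : ℂ[X] := SP.det with hDPdef
  set xh : Fin (N - k) → ℂ[X] := fun i => C (x (h i)) with hxhdef
  set w : Fin k → ℂ[X] := -(SP.adjugate.mulVec (TP.mulVec xh)) with hwdef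
  set vP : Fin N → ℂ[X] :=
    fun j => Sum.elim w (fun i => DP * C (x (h i))) (e.symm j) with hvPdef
  have hvg : ∀ i, vP (g i) = w i := by
    intro i
    have h2 : e.symm (g i) = Sum.inl i := by rw [← he₁ i, Equiv.symm_apply_apply]
    simp only [hvPdef, h2, Sum.elim_inl]
  have hvh : ∀ i, vP (h i) = DP * C (x (h i)) := by
    intro i
    have h2 : e.symm (h i) = Sum.inr i := by rw [hhdef, Equiv.symm_apply_apply]
    simp only [hvPdef, h2, Sum.elim_inr]
  -- rows f of P annihilate vP
  have hrow : ∀ i, P (f i) ⬝ᵥ vP = 0 := by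
    intro i
    have hl : SP.mulVec w i = ∑ i', P (f i) (g i') * w i' := by
      simp only [Matrix.mulVec, dotProduct, hSPdef, Matrix.submatrix_apply]
    have hr : TP.mulVec xh i = ∑ i', P (f i) (h i') * C (x (h i')) := by
      simp only [Matrix.mulVec, dotProduct, hTPdef, Matrix.submatrix_apply, hxhdef]
    have hsplit : P (f i) ⬝ᵥ vP =
        SP.mulVec w i + DP * (TP.mulVec xh i) := by
      show (∑ j, P (f i) j * vP j) = _
      rw [hsum fun j => P (f i) j * vP j, hl, hr, Finset.mul_sum]
      refine congrArg₂ (· + ·) ?_ ?_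
      · exact Finset.sum_congr rfl fun i' _ => by rw [hvg]
      · exact Finset.sum_congr rfl fun i' _ => by rw [hvh]; ring
    rw [hsplit]
    have hkey : SP.mulVec w = -(DP • TP.mulVec xh) := by
      rw [hwdef, Matrix.mulVec_neg, Matrix.mulVec_mulVec, Matrix.mul_adjugate, ← hDPdef,
        Matrix.smul_mulVec, Matrix.one_mulVec]
    rw [hkey]
    simp
  -- evaluation of vP
  set vu : ℂ → (Fin N → ℂ) := fun u j => eval u (vP j) with hvudef
  have hDeval : ∀ u : ℂ, eval u DP = ((A + u • B).submatrix f g).det := by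
    intro u
    rw [hDPdef, hSPdef, ← coe_evalRingHom, RingHom.map_det (evalRingHom u),
      RingHom.mapMatrix_apply, ← Matrix.submatrix_map, coe_evalRingHom, hPmap u]
  have hDt : eval t DP ≠ 0 := by
    rw [hDeval t]
    exact ((Matrix.isUnit_iff_isUnit_det _).mp hfg).ne_zero
  have hMv : ∀ u : ℂ, eval u DP ≠ 0 → (A + u • B).mulVec (vu u) = 0 := by
    intro u hu
    have hfrow : ∀ i, (A + u • B) (f i) ⬝ᵥ vu u = 0 := by
      intro i
      have h0 := congrArg (evalRingHom u) (hrow i)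
      rw [RingHom.map_dotProduct, map_zero] at h0
      have hcv : (⇑(evalRingHom u) ∘ P (f i)) = (A + u • B) (f i) := by
        funext j
        exact congrFun (congrFun (hPmap u) (f i)) j
      have hveq : (⇑(evalRingHom u) ∘ vP) = vu u := by
        funext j
        simp [hvudef, coe_evalRingHom]
      rw [hcv, hveq] at h0
      exact h0
    have hdet : ((A + u • B).submatrix f g).det ≠ 0 := by
      rw [← hDeval u]; exact hu
    have hindsub : LinearIndependent ℂ (fun i => ((A + u • B).submatrix f g) i) :=
      Matrix.linearIndependent_rows_iff_isUnit.mpr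
        ((Matrix.isUnit_iff_isUnit_det _).mpr (isUnit_iff_ne_zero.mpr hdet))
    have hind : LinearIndependent ℂ (fun i => (A + u • B) (f i)) := by
      have hcomp : (fun i => ((A + u • B).submatrix f g) i) =
          (LinearMap.funLeft ℂ ℂ g) ∘ (fun i => (A + u • B) (f i)) := rfl
      rw [hcomp] at hindsub
      exact LinearIndependent.of_comp _ hindsub
    exact mulVec_eq_zero_of_rows _ f hind (hge u) _ hfrow
  -- at u = t, vu t = (eval t DP) • x
  have hvt : vu t = eval t DP • x := by
    set z : Fin N → ℂ := vu t - eval t DP • x with hzdef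
    have hzker : (A + t • B).mulVec z = 0 := by
      rw [hzdef, Matrix.mulVec_sub, hMv t hDt, Matrix.mulVec_smul, hx]
      simp
    have hzh : ∀ i, z (h i) = 0 := by
      intro i
      rw [hzdef]
      simp only [Pi.sub_apply, Pi.smul_apply, smul_eq_mul, hvudef]
      rw [hvh]
      simp
    have hzg : ∀ i, z (g i) = 0 := by
      have hSrow : ((A + t • B).submatrix f g).mulVec (z ∘ g) = 0 := by
        funext i
        have h0 : (A + t • B) (f i) ⬝ᵥ z = 0 := congrFun hzker (f i)
        rw [dotProduct, hsumC fun j => (A + t • B) (f i) j * z j] at h0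
        have h1 : (∑ i', (A + t • B) (f i) (h i') * z (h i')) = 0 := by
          apply Finset.sum_eq_zero
          intro i' _
          rw [hzh i', mul_zero]
        rw [h1, add_zero] at h0
        simpa [Matrix.mulVec, dotProduct, Matrix.submatrix_apply, Function.comp] using h0
      have hinj := Matrix.mulVec_injective_iff_isUnit.mpr hfg
      have : z ∘ g = 0 := by
        apply hinj
        rw [hSrow]
        simp [Matrix.mulVec_zero]
      intro i
      exact congrFun this i
    have hz : z = 0 := by
      funext j
      obtain ⟨s, rfl⟩ := e.surjective j
      cases s with
      | inl i => rw [he₁ i]; exact hzg i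
      | inr i => exact hzh i
    have := sub_eq_zero.mp (hzdef ▸ hz)
    exact this
  -- the scalar polynomial G
  set G : ℂ[X] := (fun j => C (y j)) ⬝ᵥ ((B.map C).mulVec vP) with hGdef
  have hGeval : ∀ u : ℂ, eval u G = y ⬝ᵥ B.mulVec (vu u) := by
    intro u
    rw [hGdef, show eval u ((fun j => C (y j)) ⬝ᵥ ((B.map C).mulVec vP)) =
      (evalRingHom u) ((fun j => C (y j)) ⬝ᵥ ((B.map C).mulVec vP)) from rfl,
      RingHom.map_dotProduct]
    congr 1
    · funext j; simp
    · funext i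
      rw [Function.comp_apply, RingHom.map_mulVec]
      congr 1
      · ext a b; simp
  have hGzero : ∀ u : ℂ, eval u DP ≠ 0 → u ≠ t → eval u G = 0 := by
    intro u hu hut
    have h1 : y ⬝ᵥ (A + u • B).mulVec (vu u) = 0 := by
      rw [hMv u hu, dotProduct_zero]
    have hsymm : (A + t • B)ᵀ = A + t • B := by
      rw [Matrix.transpose_add, Matrix.transpose_smul, hA.eq, hB.eq]
    have h2 : y ⬝ᵥ (A + t • B).mulVec (vu u) = 0 := by
      rw [Matrix.dotProduct_mulVec, ← Matrix.mulVec_transpose, hsymm, hy]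
      exact zero_dotProduct _
    have h3 : (A + t • B) - (A + u • B) = (t - u) • B := by
      ext i j
      simp [Matrix.sub_apply, Matrix.add_apply, Matrix.smul_apply, smul_eq_mul]
      ring
    have h4 : y ⬝ᵥ ((t - u) • B).mulVec (vu u) = 0 := by
      rw [← h3, Matrix.sub_mulVec, dotProduct_sub, h2, h1, sub_zero]
    rw [Matrix.smul_mulVec, dotProduct_smul, smul_eq_mul] at h4
    have htu : t - u ≠ 0 := sub_ne_zero.mpr (Ne.symm hut)
    have := mul_eq_zero.mp h4
    rcases this with h | h
    · exact absurd h htu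
    · rw [hGeval]; exact h
  have hG0 : G = 0 := by
    apply Polynomial.eq_zero_of_infinite_isRoot
    have hDne : DP ≠ 0 := fun hh => hDt (by rw [hh]; simp)
    have hfinroots : {u : ℂ | DP.IsRoot u}.Finite := Polynomial.finite_setOf_isRoot hDne
    have hfin : ({u : ℂ | DP.IsRoot u} ∪ {t}).Finite := hfinroots.union (Set.finite_singleton t)
    have hinf : (({u : ℂ | DP.IsRoot u} ∪ {t})ᶜ : Set ℂ).Infinite := hfin.infinite_compl
    apply hinf.mono
    intro u hu
    simp only [Set.mem_compl_iff, Set.mem_union, Set.mem_singleton_iff, not_or] at hu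
    exact hGzero u hu.1 hu.2
  have hfinal := hGeval t
  rw [hG0, eval_zero, hvt] at hfinal
  rw [Matrix.mulVec_smul, dotProduct_smul, smul_eq_mul] at hfinal
  rcases mul_eq_zero.mp hfinal.symm with h | h
  · exact absurd h hDt
  · exact h


/-- **Segre.** Let `n ≥ 2` and let `A`, `B` be symmetric `(n+1)×(n+1)`
complex matrices whose pencil has generic corank `r` (every member `A + tB` has
corank at least `r`, with equality for some `t`) and non-constant vertices. -/
theorem vertex_span_dim_bounds (n r : ℕ) (hn : 2 ≤ n) (hr : 1 ≤ r)
    (A B : Matrix (Fin (n + 1)) (Fin (n + 1)) ℂ)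
    (hA : A.IsSymm) (hB : B.IsSymm)
    (hge : ∀ t : ℂ, (A + t • B).rank + r ≤ n + 1)
    (hmin : ∃ t : ℂ, (A + t • B).rank + r = n + 1)
    (hnc : ∃ t₁ t₂ : ℂ, (A + t₁ • B).rank + r = n + 1 ∧ (A + t₂ • B).rank + r = n + 1 ∧
      LinearMap.ker (A + t₁ • B).mulVecLin ≠ LinearMap.ker (A + t₂ • B).mulVecLin)
    (W : Submodule ℂ (Fin (n + 1) → ℂ))
    (hW : W = ⨆ t ∈ {t : ℂ | (A + t • B).rank + r = n + 1},
      LinearMap.ker (A + t • B).mulVecLin) :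
    r + 1 ≤ Module.finrank ℂ W ∧ 2 * Module.finrank ℂ W ≤ n + r + 1 := by
  classical
  have hfinfun : Module.finrank ℂ (Fin (n + 1) → ℂ) = n + 1 := Module.finrank_fin_fun ℂ
  -- dimension of the kernels
  have hdim : ∀ t : ℂ, (A + t • B).rank + r = n + 1 →
      Module.finrank ℂ (LinearMap.ker (A + t • B).mulVecLin) = r := by
    intro t ht
    have h1 := LinearMap.finrank_range_add_finrank_ker (A + t • B).mulVecLin
    rw [hfinfun] at h1
    have h3 : (A + t • B).rank
        = Module.finrank ℂ (LinearMap.range (A + t • B).mulVecLin) := rfl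
    rw [h3] at ht
    omega
  have hker : ∀ (t : ℂ) (x : Fin (n + 1) → ℂ),
      x ∈ LinearMap.ker (A + t • B).mulVecLin ↔ (A + t • B).mulVec x = 0 := by
    intro t x
    rw [LinearMap.mem_ker, Matrix.mulVecLin_apply]
  -- cross isotropy of the kernels with respect to B
  have hcross : ∀ s : ℂ, (A + s • B).rank + r = n + 1 →
      ∀ t : ℂ, (A + t • B).rank + r = n + 1 →
      ∀ x z : Fin (n + 1) → ℂ,
      (A + s • B).mulVec x = 0 → (A + t • B).mulVec z = 0 → x ⬝ᵥ B.mulVec z = 0 := by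
    intro s hs t ht x z hxk hzk
    by_cases hst : s = t
    · subst hst
      have hge' : ∀ u : ℂ, (A + u • B).rank ≤ n + 1 - r := fun u => by
        have := hge u; omega
      have ht' : (A + s • B).rank = n + 1 - r := by omega
      exact key_isotropy A B hA hB hge' s ht' z x hzk hxk
    · have h1 : x ⬝ᵥ (A + t • B).mulVec z = 0 := by
        rw [hzk]; exact dotProduct_zero x
      have hsymm : (A + s • B)ᵀ = A + s • B := by
        rw [Matrix.transpose_add, Matrix.transpose_smul, hA.eq, hB.eq]
      have h2 : x ⬝ᵥ (A + s • B).mulVec z = 0 := by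
        rw [Matrix.dotProduct_mulVec, ← Matrix.mulVec_transpose, hsymm, hxk]
        exact zero_dotProduct _
      have h3 : (A + s • B) - (A + t • B) = (s - t) • B := by
        ext i j
        simp only [Matrix.sub_apply, Matrix.add_apply, Matrix.smul_apply, smul_eq_mul]
        ring
      have h4 : x ⬝ᵥ ((s - t) • B).mulVec z = 0 := by
        rw [← h3, Matrix.sub_mulVec, dotProduct_sub, h2, h1, sub_zero]
      rw [Matrix.smul_mulVec, dotProduct_smul, smul_eq_mul] at h4
      rcases mul_eq_zero.mp h4 with h | h
      · exact absurd (sub_eq_zero.mp h) hst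
      · exact h
  obtain ⟨t₁, t₂, ht₁, ht₂, hne⟩ := hnc
  constructor
  · -- lower bound
    set K₁ := LinearMap.ker (A + t₁ • B).mulVecLin with hK₁
    set K₂ := LinearMap.ker (A + t₂ • B).mulVecLin with hK₂
    have hK₁W : K₁ ≤ W := by
      rw [hW]
      exact le_iSup₂ (f := fun t (_ : t ∈ {t : ℂ | (A + t • B).rank + r = n + 1}) =>
        LinearMap.ker (A + t • B).mulVecLin) t₁ ht₁
    have hK₂W : K₂ ≤ W := by
      rw [hW]
      exact le_iSup₂ (f := fun t (_ : t ∈ {t : ℂ | (A + t • B).rank + r = n + 1}) =>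
        LinearMap.ker (A + t • B).mulVecLin) t₂ ht₂
    have hd1 : Module.finrank ℂ K₁ = r := hdim t₁ ht₁
    have hd2 : Module.finrank ℂ K₂ = r := hdim t₂ ht₂
    have hinf_lt : K₁ ⊓ K₂ < K₁ := by
      refine lt_of_le_of_ne inf_le_left ?_
      intro heq
      apply hne
      have hle : K₁ ≤ K₂ := heq ▸ inf_le_right
      exact Submodule.eq_of_le_of_finrank_le hle (by rw [hd1, hd2])
    have hinf : Module.finrank ℂ (K₁ ⊓ K₂ : Submodule ℂ (Fin (n + 1) → ℂ)) < r := by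
      rw [← hd1]
      exact Submodule.finrank_lt_finrank_of_lt hinf_lt
    have hsum := Submodule.finrank_sup_add_finrank_inf_eq K₁ K₂
    have hfr : r + 1 ≤ Module.finrank ℂ (K₁ ⊔ K₂ : Submodule ℂ (Fin (n + 1) → ℂ)) := by
      omega
    exact hfr.trans (Submodule.finrank_mono (sup_le hK₁W hK₂W))
  · -- upper bound
    set M₀ := A + t₁ • B with hM₀
    set b : LinearMap.BilinForm ℂ (Fin (n + 1) → ℂ) := Matrix.toBilin' M₀ with hb
    have hbapp : ∀ v w, b v w = v ⬝ᵥ M₀.mulVec w := fun v w => Matrix.toBilin'_apply' M₀ v w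
    have hsymm : M₀ᵀ = M₀ := by
      rw [hM₀, Matrix.transpose_add, Matrix.transpose_smul, hA.eq, hB.eq]
    have hcomm : ∀ v w, b v w = b w v := by
      intro v w
      rw [hbapp, hbapp, Matrix.dotProduct_mulVec, ← Matrix.mulVec_transpose, hsymm,
        dotProduct_comm]
    have hrefl : b.IsRefl := fun v w h => by rw [hcomm]; exact h
    have hWle : W ≤ b.orthogonal W := by
      nth_rewrite 1 [hW]
      refine iSup₂_le fun t ht m hm => ?_
      rw [LinearMap.BilinForm.mem_orthogonal_iff]
      intro nvec hn
      have hWk : W ≤ LinearMap.ker (b.flip m) := by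
        rw [hW]
        refine iSup₂_le fun s hs nv hnv => ?_
        rw [LinearMap.mem_ker]
        show b nv m = 0
        have hBnm : nv ⬝ᵥ B.mulVec m = 0 :=
          hcross s hs t ht nv m ((hker s nv).mp hnv) ((hker t m).mp hm)
        have hAnm : nv ⬝ᵥ (A + t • B).mulVec m = 0 := by
          rw [(hker t m).mp hm]; exact dotProduct_zero nv
        have hsplit : M₀ = (A + t • B) + (t₁ - t) • B := by
          ext i j
          simp only [hM₀, Matrix.add_apply, Matrix.smul_apply, smul_eq_mul]
          ring
        rw [hbapp, hsplit, Matrix.add_mulVec, dotProduct_add, hAnm,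
          Matrix.smul_mulVec, dotProduct_smul, smul_eq_mul, hBnm]
        ring
      have h0 := hWk hn
      rw [LinearMap.mem_ker] at h0
      exact (show b nvec m = 0 from h0)
    have h₁ := LinearMap.BilinForm.finrank_add_finrank_orthogonal hrefl W
    have h₂ : Module.finrank ℂ W ≤ Module.finrank ℂ (b.orthogonal W) :=
      Submodule.finrank_mono hWle
    have h₃ : b.orthogonal ⊤ ≤ LinearMap.ker M₀.mulVecLin := by
      intro m hm
      rw [LinearMap.mem_ker, Matrix.mulVecLin_apply]
      funext j
      have h5 := hm (Pi.single j 1) Submodule.mem_top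
      have h6 : (Pi.single j 1 : Fin (n + 1) → ℂ) ⬝ᵥ M₀.mulVec m = 0 := by
        rw [← hbapp]; exact h5
      rw [single_dotProduct, one_mul] at h6
      simpa using h6
    have h₄ : Module.finrank ℂ (W ⊓ b.orthogonal ⊤ : Submodule ℂ (Fin (n + 1) → ℂ)) ≤ r := by
      have h7 := Submodule.finrank_mono
        (le_trans (inf_le_right : W ⊓ b.orthogonal ⊤ ≤ b.orthogonal ⊤) h₃)
      rw [hdim t₁ ht₁] at h7
      exact h7
    rw [hfinfun] at h₁
    omega
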